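/- Let f, g : ℝⁿ → ℝ be continuous even functions homogeneous of the same degree k > 0 with respect to the same dilation (r₁,…,rₙ). Suppose f is strictly copositive with g (g(x) ≥ 0 and x ≠ 0 imply f(x) > 0) and suppose there exist a, b ∈ ℝ with a² + b² > 0 such that neither the system {f(x) = a, g(x) = b} nor the system {f(x) = −a, g(x) = −b} has a solution x ∈ ℝⁿ. Then there exists ξ > 0 such that f(x) − ξ·g(x) > 0 for all nonzero x ∈ ℝⁿ. -/

import Mathlib

open Set

lemma shs_ivt_aux {n : ℕ} (F : (Fin n → ℝ) → ℝ) (hFc : Continuous F)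
    (x y : Fin n → ℝ)
    (hseg : ∀ t ∈ Icc (0:ℝ) 1, (1 - t) • x + t • y ≠ 0)
    (hxF : F x ≤ 0) (hyF : 0 ≤ F y) : ∃ z, z ≠ 0 ∧ F z = 0 := by
  have hφ : Continuous fun t : ℝ => F ((1 - t) • x + t • y) :=
    hFc.comp (((continuous_const.sub continuous_id).smul continuous_const).add
      (continuous_id.smul continuous_const))
  have hmem : (0:ℝ) ∈ Icc (F ((1 - (0:ℝ)) • x + (0:ℝ) • y)) (F ((1 - (1:ℝ)) • x + (1:ℝ) • y)) := by
    constructor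
    · simpa using hxF
    · simpa using hyF
  obtain ⟨t, ht, hFt⟩ := intermediate_value_Icc zero_le_one hφ.continuousOn hmem
  exact ⟨_, hseg t ht, hFt⟩

lemma shs_ivt_even {n : ℕ} (F : (Fin n → ℝ) → ℝ) (hFc : Continuous F)
    (hFe : ∀ x, F (-x) = F x) {x y : Fin n → ℝ} (hx : x ≠ 0) (hy : y ≠ 0)
    (hxF : F x ≤ 0) (hyF : 0 ≤ F y) : ∃ z, z ≠ 0 ∧ F z = 0 := by
  by_cases hseg : ∀ t ∈ Icc (0:ℝ) 1, (1 - t) • x + t • y ≠ 0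
  · exact shs_ivt_aux F hFc x y hseg hxF hyF
  · push_neg at hseg
    obtain ⟨t, ht, h0⟩ := hseg
    have ht0 : t ≠ 0 := by
      rintro rfl; simp at h0; exact hx h0
    have ht1 : t ≠ 1 := by
      rintro rfl; simp at h0; exact hy h0
    have htpos : 0 < t := lt_of_le_of_ne ht.1 (Ne.symm ht0)
    have htlt : t < 1 := lt_of_le_of_ne ht.2 ht1
    have hty : t • y = (t - 1) • x := by
      have h1 : t • y = -((1 - t) • x) := by
        rw [eq_neg_iff_add_eq_zero, add_comm]; exact h0
      rw [h1, ← neg_smul]; congr 1; ring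
    have hyx : -y = ((1 - t) / t) • x := by
      have hy2 : y = (t⁻¹ * (t - 1)) • x := by
        rw [← smul_smul, ← hty, smul_smul, inv_mul_cancel₀ ht0, one_smul]
      rw [hy2, ← neg_smul]
      congr 1
      field_simp
      ring
    have hcpos : 0 < (1 - t) / t := div_pos (by linarith) htpos
    have hseg2 : ∀ u ∈ Icc (0:ℝ) 1, (1 - u) • x + u • (-y) ≠ 0 := by
      intro u hu
      rw [hyx, smul_smul, ← add_smul]
      have hco : 0 < 1 - u + u * ((1 - t) / t) := by
        rcases eq_or_lt_of_le hu.2 with h | h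
        · subst h; simpa using hcpos
        · nlinarith [mul_nonneg hu.1 hcpos.le]
      exact smul_ne_zero hco.ne' hx
    have hyF' : 0 ≤ F (-y) := by rw [hFe]; exact hyF
    exact shs_ivt_aux F hFc x (-y) hseg2 hxF hyF'

theorem shs_lemma_nontrivial_direction (n : ℕ) (f g : (Fin n → ℝ) → ℝ)
    (r : Fin n → ℝ) (hr : ∀ i, 0 < r i) (k : ℝ) (hk : 0 < k)
    (hfc : Continuous f) (hgc : Continuous g)
    (hfeven : ∀ x : Fin n → ℝ, f (-x) = f x)
    (hgeven : ∀ x : Fin n → ℝ, g (-x) = g x)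
    (hfhom : ∀ ε : ℝ, 0 < ε → ∀ x : Fin n → ℝ,
      f (fun i => ε ^ (r i) * x i) = ε ^ k * f x)
    (hghom : ∀ ε : ℝ, 0 < ε → ∀ x : Fin n → ℝ,
      g (fun i => ε ^ (r i) * x i) = ε ^ k * g x)
    (hcop : ∀ x : Fin n → ℝ, g x ≥ 0 → x ≠ 0 → f x > 0)
    (hab : ∃ a b : ℝ, a ^ 2 + b ^ 2 > 0 ∧
      ¬ (∃ x : Fin n → ℝ, f x = a ∧ g x = b) ∧
      ¬ (∃ x : Fin n → ℝ, f x = -a ∧ g x = -b)) :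
    ∃ ξ : ℝ, 0 < ξ ∧ ∀ x : Fin n → ℝ, x ≠ 0 → f x - ξ * g x > 0 := by
  obtain ⟨a, b, habpos, hab1, hab2⟩ := hab
  rcases Nat.eq_zero_or_pos n with hn | hn
  · refine ⟨1, one_pos, fun x hx => absurd (funext fun i => ?_) hx⟩
    exact absurd i.2 (by omega)
  -- dilation helper
  have hdil : ∀ (x : Fin n → ℝ), x ≠ 0 → ∀ t : ℝ, 0 < t →
      ∃ y : Fin n → ℝ, y ≠ 0 ∧ f y = t * f x ∧ g y = t * g x := by
    intro x hx t ht
    set ε := t ^ (k⁻¹) with hε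
    have hεpos : 0 < ε := Real.rpow_pos_of_pos ht _
    have hεk : ε ^ k = t := by
      rw [hε, ← Real.rpow_mul ht.le, inv_mul_cancel₀ hk.ne', Real.rpow_one]
    refine ⟨fun i => ε ^ (r i) * x i, ?_, ?_, ?_⟩
    · obtain ⟨j, hj⟩ := Function.ne_iff.mp hx
      refine Function.ne_iff.mpr ⟨j, ?_⟩
      simp only [Pi.zero_apply] at hj ⊢
      exact mul_ne_zero (Real.rpow_pos_of_pos hεpos _).ne' hj
    · rw [hfhom ε hεpos x, hεk]
    · rw [hghom ε hεpos x, hεk]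
  have hcop' : ∀ x : Fin n → ℝ, x ≠ 0 → f x ≤ 0 → g x < 0 := by
    intro x hx hf
    by_contra hg
    push_neg at hg
    exact absurd (hcop x hg hx) (not_lt.mpr hf)
  -- the linear combination H
  set H : (Fin n → ℝ) → ℝ := fun x => b * f x - a * g x with hH
  have hHc : Continuous H := (continuous_const.mul hfc).sub (continuous_const.mul hgc)
  have hHe : ∀ x, H (-x) = H x := by
    intro x; simp only [hH, hfeven, hgeven]
  have hHnz : ∀ x : Fin n → ℝ, x ≠ 0 → H x ≠ 0 := by
    intro x hx hH0
    have hbf : b * f x = a * g x := by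
      simp only [hH] at hH0; linarith
    have hfx : f x * (a ^ 2 + b ^ 2) = (a * f x + b * g x) * a := by linear_combination b * hbf
    have hgx : g x * (a ^ 2 + b ^ 2) = (a * f x + b * g x) * b := by linear_combination (-a) * hbf
    set s := a * f x + b * g x with hs
    have hsne : s ≠ 0 := by
      intro h0
      rw [h0, zero_mul] at hfx hgx
      have hf0 : f x = 0 := by nlinarith
      have hg0 : g x = 0 := by nlinarith
      have := hcop x (le_of_eq hg0.symm) hx
      rw [hf0] at this
      exact lt_irrefl 0 this
    set t := s / (a ^ 2 + b ^ 2) with htdef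
    have htne : t ≠ 0 := div_ne_zero hsne habpos.ne'
    have hfx' : f x = t * a := by
      rw [htdef]; field_simp; linarith [hfx]
    have hgx' : g x = t * b := by
      rw [htdef]; field_simp; linarith [hgx]
    rcases htne.lt_or_gt with htneg | htpos
    · obtain ⟨y, hy, hfy, hgy⟩ := hdil x hx (-t)⁻¹ (inv_pos.mpr (by linarith))
      have htne2 : -t ≠ 0 := by linarith
      refine hab2 ⟨y, ?_, ?_⟩
      · rw [hfy, hfx']; field_simp
      · rw [hgy, hgx']; field_simp
    · obtain ⟨y, hy, hfy, hgy⟩ := hdil x hx t⁻¹ (inv_pos.mpr htpos)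
      refine hab1 ⟨y, ?_, ?_⟩
      · rw [hfy, hfx']; field_simp
      · rw [hgy, hgx']; field_simp
  -- the dilation sphere
  set N : (Fin n → ℝ) → ℝ := fun x => ∑ i, |x i| ^ ((2:ℝ) / r i) with hN
  have hexp : ∀ i : Fin n, (0:ℝ) < 2 / r i := fun i => div_pos two_pos (hr i)
  have hNc : Continuous N := by
    apply continuous_finset_sum
    intro i _
    exact ((continuous_apply i).abs).rpow_const (fun x => Or.inr (hexp i).le)
  have hterm_nonneg : ∀ (x : Fin n → ℝ) (i : Fin n), 0 ≤ |x i| ^ ((2:ℝ) / r i) :=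
    fun x i => Real.rpow_nonneg (abs_nonneg _) _
  have hN0 : ∀ x : Fin n → ℝ, x ≠ 0 → 0 < N x := by
    intro x hx
    obtain ⟨j, hj⟩ := Function.ne_iff.mp hx
    have hj' : x j ≠ 0 := by simpa using hj
    calc (0:ℝ) < |x j| ^ ((2:ℝ) / r j) := Real.rpow_pos_of_pos (abs_pos.mpr hj') _
      _ ≤ N x := Finset.single_le_sum (fun i _ => hterm_nonneg x i) (Finset.mem_univ j)
  have hSnz : ∀ x : Fin n → ℝ, N x = 1 → x ≠ 0 := by
    intro x hNx
    rintro rfl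
    have hzero : N 0 = 0 := by
      rw [hN]
      simp only [Pi.zero_apply, abs_zero]
      exact Finset.sum_eq_zero fun i _ => Real.zero_rpow (hexp i).ne'
    exact one_ne_zero (hNx.symm.trans hzero)
  -- normalization
  have hnorm : ∀ x : Fin n → ℝ, x ≠ 0 → ∃ ε : ℝ, 0 < ε ∧ ∃ y : Fin n → ℝ,
      N y = 1 ∧ x = fun i => ε ^ (r i) * y i := by
    intro x hx
    have hc : 0 < N x := hN0 x hx
    set ε := (N x) ^ ((1:ℝ) / 2) with hεdef
    have hεpos : 0 < ε := Real.rpow_pos_of_pos hc _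
    have hε2 : ε ^ (2:ℝ) = N x := by
      rw [hεdef, ← Real.rpow_mul hc.le]
      norm_num
    refine ⟨ε, hεpos, fun i => (ε ^ (r i))⁻¹ * x i, ?_, ?_⟩
    · have hterm : ∀ i : Fin n, |(ε ^ (r i))⁻¹ * x i| ^ ((2:ℝ) / r i)
          = (ε ^ (2:ℝ))⁻¹ * |x i| ^ ((2:ℝ) / r i) := by
        intro i
        have hεr : 0 < ε ^ (r i) := Real.rpow_pos_of_pos hεpos _
        have harg : r i * ((2:ℝ) / r i) = 2 := by
          field_simp [(hr i).ne']
        rw [abs_mul, abs_of_pos (inv_pos.mpr hεr),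
          Real.mul_rpow (inv_nonneg.mpr hεr.le) (abs_nonneg _),
          Real.inv_rpow hεr.le, ← Real.rpow_mul hεpos.le, harg]
      rw [hN]
      simp only
      rw [Finset.sum_congr rfl (fun i _ => hterm i), ← Finset.mul_sum, hε2]
      rw [hN] at hc ⊢
      exact inv_mul_cancel₀ hc.ne'
    · funext i
      have hεr : (ε ^ (r i)) ≠ 0 := (Real.rpow_pos_of_pos hεpos _).ne'
      simp only
      rw [← mul_assoc, mul_inv_cancel₀ hεr, one_mul]
  -- transfer from the sphere
  have htrans : ∀ ξ : ℝ, 0 < ξ → (∀ y : Fin n → ℝ, N y = 1 → 0 < f y - ξ * g y) →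
      ∀ x : Fin n → ℝ, x ≠ 0 → f x - ξ * g x > 0 := by
    intro ξ hξ hS x hx
    obtain ⟨ε, hε, y, hNy, hxy⟩ := hnorm x hx
    have hfy := hfhom ε hε y
    have hgy := hghom ε hε y
    rw [hxy, hfy, hgy]
    have heq : ε ^ k * f y - ξ * (ε ^ k * g y) = ε ^ k * (f y - ξ * g y) := by ring
    rw [heq]
    exact mul_pos (Real.rpow_pos_of_pos hε _) (hS y hNy)
  -- compactness of the sphere
  have hScomp : IsCompact {x : Fin n → ℝ | N x = 1} := by
    have hclosed : IsClosed {x : Fin n → ℝ | N x = 1} := isClosed_eq hNc continuous_const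
    have hsub : {x : Fin n → ℝ | N x = 1} ⊆ Icc (fun _ => (-1:ℝ)) (fun _ => 1) := by
      intro x hx
      have hx1 : N x = 1 := hx
      have hb : ∀ i, |x i| ≤ 1 := by
        intro i
        by_contra hgt
        push_neg at hgt
        have h1 : 1 < |x i| ^ ((2:ℝ) / r i) :=
          (Real.one_lt_rpow_iff_of_pos (by linarith)).mpr (Or.inl ⟨hgt, hexp i⟩)
        have h2 : |x i| ^ ((2:ℝ) / r i) ≤ N x :=
          Finset.single_le_sum (fun j _ => hterm_nonneg x j) (Finset.mem_univ i)
        rw [hx1] at h2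
        linarith
      exact ⟨fun i => (abs_le.mp (hb i)).1, fun i => (abs_le.mp (hb i)).2⟩
    exact IsCompact.of_isClosed_subset isCompact_Icc hclosed hsub
  have hSne : {x : Fin n → ℝ | N x = 1}.Nonempty := by
    have hone : (fun _ : Fin n => (1:ℝ)) ≠ 0 := by
      intro h
      have := congrFun h ⟨0, hn⟩
      simp at this
    obtain ⟨ε, hε, y, hNy, _⟩ := hnorm _ hone
    exact ⟨y, hNy⟩
  by_cases hfpos : ∀ x : Fin n → ℝ, x ≠ 0 → 0 < f x
  · -- Case I : f positive off the origin
    obtain ⟨xm, hxm, hxmmin⟩ := hScomp.exists_isMinOn hSne hfc.continuousOn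
    obtain ⟨xM, hxM, hxMmax⟩ := hScomp.exists_isMaxOn hSne hgc.abs.continuousOn
    set m := f xm with hm
    set M := |g xM| with hM
    have hmpos : 0 < m := hfpos xm (hSnz xm hxm)
    have hMnn : 0 ≤ M := abs_nonneg _
    have hξ : 0 < m / (M + 1) := div_pos hmpos (by linarith)
    refine ⟨m / (M + 1), hξ, htrans _ hξ ?_⟩
    intro y hy
    have h1 : m ≤ f y := isMinOn_iff.mp hxmmin y hy
    have h2 : |g y| ≤ M := isMaxOn_iff.mp hxMmax y hy
    have h3 : g y ≤ M := le_trans (le_abs_self _) h2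
    have h4 : m / (M + 1) * (M + 1) = m := by field_simp
    nlinarith [mul_le_mul_of_nonneg_left h3 hξ.le]
  push_neg at hfpos
  obtain ⟨x₀, hx₀, hfx₀⟩ := hfpos
  by_cases hgneg : ∀ x : Fin n → ℝ, x ≠ 0 → g x < 0
  · -- Case II : g negative off the origin
    obtain ⟨xm, hxm, hxmmin⟩ := hScomp.exists_isMinOn hSne hfc.continuousOn
    obtain ⟨xg, hxg, hxgmax⟩ := hScomp.exists_isMaxOn hSne hgc.continuousOn
    set δ := -g xg with hδdef
    have hδ : 0 < δ := neg_pos.mpr (hgneg xg (hSnz xg hxg))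
    set m₀ := f xm with hm₀
    have hξ : 0 < (|m₀| + 1) / δ := div_pos (by positivity) hδ
    refine ⟨(|m₀| + 1) / δ, hξ, htrans _ hξ ?_⟩
    intro y hy
    have h1 : m₀ ≤ f y := isMinOn_iff.mp hxmmin y hy
    have h2 : g y ≤ -δ := by
      have := isMaxOn_iff.mp hxgmax y hy
      rw [hδdef]; linarith
    have h4 : (|m₀| + 1) / δ * δ = |m₀| + 1 := by field_simp
    nlinarith [mul_le_mul_of_nonneg_left h2 hξ.le, neg_abs_le m₀]
  -- Case III : the strictly separating line through (a,b)
  push_neg at hgneg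
  obtain ⟨y₀, hy₀, hgy₀⟩ := hgneg
  have hfy₀ : 0 < f y₀ := hcop y₀ hgy₀ hy₀
  obtain ⟨z₁, hz₁, hfz₁⟩ := shs_ivt_even f hfc hfeven hx₀ hy₀ hfx₀ hfy₀.le
  have hgz₁ : g z₁ < 0 := hcop' z₁ hz₁ hfz₁.le
  have hgx₀ : g x₀ < 0 := hcop' x₀ hx₀ hfx₀
  obtain ⟨z₂, hz₂, hgz₂⟩ := shs_ivt_even g hgc hgeven hx₀ hy₀ hgx₀.le hgy₀
  have hfz₂ : 0 < f z₂ := hcop z₂ (le_of_eq hgz₂.symm) hz₂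
  have hsame : ∀ u v : Fin n → ℝ, u ≠ 0 → v ≠ 0 → 0 < H u * H v := by
    intro u v hu hv
    rcases (hHnz u hu).lt_or_gt with h1 | h1 <;>
      rcases (hHnz v hv).lt_or_gt with h2 | h2
    · exact mul_pos_of_neg_of_neg h1 h2
    · obtain ⟨z, hz, hz0⟩ := shs_ivt_even H hHc hHe hu hv h1.le h2.le
      exact absurd hz0 (hHnz z hz)
    · obtain ⟨z, hz, hz0⟩ := shs_ivt_even H hHc hHe hv hu h2.le h1.le
      exact absurd hz0 (hHnz z hz)
    · exact mul_pos h1 h2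
  have hHz₁ : H z₁ = -a * g z₁ := by
    simp only [hH, hfz₁]; ring
  have hHz₂ : H z₂ = b * f z₂ := by
    simp only [hH, hgz₂]; ring
  have habprod : 0 < a * b := by
    have h12 := hsame z₁ z₂ hz₁ hz₂
    rw [hHz₁, hHz₂] at h12
    nlinarith [mul_pos (neg_pos.mpr hgz₁) hfz₂]
  have hbne : b ≠ 0 := by
    rintro rfl; simp at habprod
  refine ⟨a / b, ?_, ?_⟩
  · rcases mul_pos_iff.mp habprod with ⟨ha, hb⟩ | ⟨ha, hb⟩
    · exact div_pos ha hb
    · exact div_pos_iff.mpr (Or.inr ⟨ha, hb⟩)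
  · intro x hx
    have hsx := hsame x z₂ hx hz₂
    rw [hHz₂] at hsx
    have hxb : 0 < H x * b := by nlinarith
    have hb2 : 0 < b ^ 2 := lt_of_le_of_ne (sq_nonneg b) (Ne.symm (pow_ne_zero 2 hbne))
    have heq : f x - a / b * g x = (H x * b) / b ^ 2 := by
      simp only [hH]
      field_simp
    rw [gt_iff_lt, heq]
    exact div_pos hxb hb2
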